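/- Under the hypotheses of the constant-step-size policy gradient bound—(Ω, ℱ, ℙ) with filtration (ℱ_k), J : ℝ^d → ℝ differentiable, bounded, J ≤ J*, satisfying |J(x) − J(y) − ⟨∇J(y), x−y⟩| ≤ M_J(‖x−y‖^{1+β} + ‖x−y‖² + λ‖x−y‖); iterates θ_{k+1} = θ_k + η g_k with 𝔼[g_k|ℱ_k] = ∇J(θ_k) and conditional moment bounds 𝔼[‖g_k‖|ℱ_k] ≤ D₁, 𝔼[‖g_k‖^{1+β}|ℱ_k] ≤ D_{1+β}, 𝔼[‖g_k‖²|ℱ_k] ≤ D₂ almost surely—set L := M_J·max{D₁, D_{1+β}, D₂} and assume L > 0 and J* > J(θ₀). Fix K ∈ ℕ with K ≥ (J* − J(θ₀))/(2L), and choose the constant step size η := ((J* − J(θ₀))/(2L))^{1/(1+β)}·K^{−1/(1+β)} (so that η ≤ 1). Then (1/K)·Σ_{k=0}^{K−1} 𝔼[‖∇J(θ_k)‖²] ≤ 2·(2L)^{1/(1+β)}·(J* − J(θ₀))^{β/(1+β)}·K^{−β/(1+β)} + L·λ. -/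

import Mathlib

open MeasureTheory
open scoped RealInnerProductSpace

lemma my_condexp_clm_comm {Ω : Type*} {m m0 : MeasurableSpace Ω} (hm : m ≤ m0)
    {μ : Measure Ω} [IsFiniteMeasure μ]
    {E F : Type*} [NormedAddCommGroup E] [NormedSpace ℝ E] [CompleteSpace E]
    [NormedAddCommGroup F] [NormedSpace ℝ F] [CompleteSpace F]
    (T : E →L[ℝ] F) {f : Ω → E} (hf : Integrable f μ) :
    (fun ω => T ((μ[f|m]) ω)) =ᵐ[μ] μ[fun ω => T (f ω)|m] := by
  refine ae_eq_condExp_of_forall_setIntegral_eq hm (T.integrable_comp hf)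
    (fun s hs hμs => (T.integrable_comp integrable_condExp).integrableOn)
    (fun s hs hμs => ?_) ?_
  · rw [T.integral_comp_comm integrable_condExp.integrableOn,
        T.integral_comp_comm hf.integrableOn, setIntegral_condExp hm hf hs]
  · exact (T.continuous.comp_stronglyMeasurable (stronglyMeasurable_condExp (m := m))).aestronglyMeasurable

lemma my_log_eq {x y : ℝ} (hx : 0 < x) (hy : 0 < y) (h : Real.log x = Real.log y) : x = y := by
  rw [← Real.exp_log hx, h, Real.exp_log hy]

set_option maxHeartbeats 1000000 in
/-- The paper's Theorem 1 (tuned constant step size): with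
`L = M_J max{D₁, D_{1+β}, D₂} > 0`, `J* > J(θ₀)`, `K ≥ (J*-J(θ₀))/(2L)` and
`η = ((J*-J(θ₀))/(2L))^{1/(1+β)} K^{-1/(1+β)}`, the averaged expected squared
gradient norm obeys
`(1/K) Σ 𝔼‖∇J(θ_k)‖² ≤ 2 (2L)^{1/(1+β)} (J*-J(θ₀))^{β/(1+β)} K^{-β/(1+β)} + Lλ`. -/
theorem stmt8 {Ω : Type*} {m0 : MeasurableSpace Ω} (P : Measure Ω) [IsProbabilityMeasure P]
    (ℱ : Filtration ℕ m0)
    (d : ℕ) (MJ β lam η Jstar D₁ D1β D₂ Jmax L : ℝ) (K : ℕ)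
    (hMJ : 0 ≤ MJ) (hβ : β ∈ Set.Ioc (0 : ℝ) 1) (hlam : 0 ≤ lam)
    (hD₁ : 0 ≤ D₁) (hD1β : 0 ≤ D1β) (hD₂ : 0 ≤ D₂)
    (J : EuclideanSpace ℝ (Fin d) → ℝ)
    (J' : EuclideanSpace ℝ (Fin d) → EuclideanSpace ℝ (Fin d))
    (hJdiff : ∀ x, HasGradientAt J (J' x) x)
    (hJbdd : ∀ x, |J x| ≤ Jmax)
    (hJub : ∀ x, J x ≤ Jstar)
    (hsmooth : ∀ x y : EuclideanSpace ℝ (Fin d),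
      |J x - J y - ⟪J' y, x - y⟫|
        ≤ MJ * (‖x - y‖ ^ (1 + β) + ‖x - y‖ ^ 2 + lam * ‖x - y‖))
    (θ0 : EuclideanSpace ℝ (Fin d))
    (θ : ℕ → Ω → EuclideanSpace ℝ (Fin d))
    (g : ℕ → Ω → EuclideanSpace ℝ (Fin d))
    (hθ0 : ∀ ω, θ 0 ω = θ0)
    (hθrec : ∀ k ω, θ (k + 1) ω = θ k ω + η • g k ω)
    (hgadapt : ∀ k, Measurable[ℱ (k + 1)] (g k))
    (hgL2 : ∀ k, MemLp (g k) 2 P)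
    (hgmean : ∀ k, P[g k | ℱ k] =ᵐ[P] fun ω => J' (θ k ω))
    (hg1 : ∀ k, ∀ᵐ ω ∂P, (P[fun ω' => ‖g k ω'‖ | ℱ k]) ω ≤ D₁)
    (hg1β : ∀ k, ∀ᵐ ω ∂P, (P[fun ω' => ‖g k ω'‖ ^ (1 + β) | ℱ k]) ω ≤ D1β)
    (hg2 : ∀ k, ∀ᵐ ω ∂P, (P[fun ω' => ‖g k ω'‖ ^ 2 | ℱ k]) ω ≤ D₂)
    (hL : L = MJ * max D₁ (max D1β D₂)) (hLpos : 0 < L)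
    (hgap : J θ0 < Jstar)
    (hK : (Jstar - J θ0) / (2 * L) ≤ (K : ℝ))
    (hηdef : η = ((Jstar - J θ0) / (2 * L)) ^ ((1 : ℝ) / (1 + β)) *
      (K : ℝ) ^ (-(1 : ℝ) / (1 + β))) :
    (1 / (K : ℝ)) * ∑ k ∈ Finset.range K, ∫ ω, ‖J' (θ k ω)‖ ^ 2 ∂P
      ≤ 2 * (2 * L) ^ ((1 : ℝ) / (1 + β)) * (Jstar - J θ0) ^ (β / (1 + β)) *
          (K : ℝ) ^ (-β / (1 + β)) + L * lam := by
  obtain ⟨hβ0, hβ1⟩ := hβ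
  have hG : 0 < Jstar - J θ0 := sub_pos.2 hgap
  set G : ℝ := Jstar - J θ0 with hGdef
  have h2L : 0 < 2 * L := by linarith
  have h1β : (0:ℝ) < 1 + β := by linarith
  have hKpos : 0 < (K : ℝ) := lt_of_lt_of_le (div_pos hG h2L) hK
  set c : ℝ := 1 / (1 + β) with hcdef
  set b : ℝ := β / (1 + β) with hbdef
  have hc0 : 0 < c := by rw [hcdef]; positivity
  have hr : 0 < G / (2 * L) := div_pos hG h2L
  have hηdef' : η = (G / (2 * L)) ^ c * (K : ℝ) ^ (-c) := by
    rw [hηdef, neg_div]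
  have hηpos : 0 < η := by
    rw [hηdef']; positivity
  have hηle1 : η ≤ 1 := by
    rw [hηdef', Real.rpow_neg hKpos.le, ← div_eq_mul_inv, div_le_one (by positivity)]
    exact Real.rpow_le_rpow hr.le hK hc0.le
  have hηβ : η ≤ η ^ β := by
    nth_rewrite 1 [← Real.rpow_one η]
    exact Real.rpow_le_rpow_of_exponent_ge hηpos hηle1 hβ1
  have hηβpos : 0 < η ^ β := Real.rpow_pos_of_pos hηpos β
  -- measurability of iterates
  have hθm : ∀ k, Measurable[ℱ k] (θ k) := by
    intro k
    induction k with
    | zero =>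
      have : θ 0 = fun _ => θ0 := funext hθ0
      rw [this]; exact measurable_const
    | succ k ih =>
      have : θ (k + 1) = fun ω => θ k ω + η • g k ω := funext (hθrec k)
      rw [this]
      exact ((ih.mono (ℱ.mono k.le_succ) le_rfl).add ((hgadapt k).const_smul η))
  have hθm0 : ∀ k, Measurable (θ k) := fun k => (hθm k).mono (ℱ.le k) le_rfl
  have hgm0 : ∀ k, Measurable (g k) := fun k => (hgadapt k).mono (ℱ.le (k+1)) le_rfl
  have hJdiffble : Differentiable ℝ J := fun x => (hJdiff x).hasFDerivAt.differentiableAt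
  have hJcont : Continuous J := hJdiffble.continuous
  have hJ'meas : Measurable J' := by
    have hJ'eq : J' = fun x => (InnerProductSpace.toDual ℝ _).symm (fderiv ℝ J x) := by
      funext x
      rw [(hJdiff x).hasFDerivAt.fderiv, LinearIsometryEquiv.symm_apply_apply]
    rw [hJ'eq]
    exact (InnerProductSpace.toDual ℝ _).symm.continuous.measurable.comp (measurable_fderiv ℝ J)
  have hvm : ∀ k, Measurable[ℱ k] (fun ω => J' (θ k ω)) := fun k => hJ'meas.comp (hθm k)
  have hvm0 : ∀ k, Measurable (fun ω => J' (θ k ω)) := fun k => (hvm k).mono (ℱ.le k) le_rfl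
  -- integrability of g and its norms
  have hg_int : ∀ k, Integrable (g k) P := fun k =>
    memLp_one_iff_integrable.mp ((hgL2 k).mono_exponent (by norm_num))
  have hgnorm_int : ∀ k, Integrable (fun ω => ‖g k ω‖) P := fun k => (hg_int k).norm
  have hgsq_int : ∀ k, Integrable (fun ω => ‖g k ω‖ ^ 2) P := by
    intro k
    have := (hgL2 k).integrable_norm_rpow (by norm_num) (by norm_num)
    simpa [ENNReal.toReal_ofNat, Real.rpow_natCast] using this
  have hg1β_int : ∀ k, Integrable (fun ω => ‖g k ω‖ ^ (1 + β)) P := by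
    intro k
    refine Integrable.mono' (g := fun ω => 1 + ‖g k ω‖ ^ 2)
      (by simpa using (integrable_const (1:ℝ)).add (hgsq_int k))
      (((Real.continuous_rpow_const (by linarith : (0:ℝ) ≤ 1 + β)).measurable.comp
        (hgm0 k).norm).aestronglyMeasurable) (ae_of_all _ fun ω => ?_)
    have h0 : (0:ℝ) ≤ ‖g k ω‖ := norm_nonneg _
    rw [Real.norm_eq_abs, abs_of_nonneg (Real.rpow_nonneg h0 _)]
    show ‖g k ω‖ ^ ((1:ℝ) + β) ≤ 1 + ‖g k ω‖ ^ 2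
    rcases le_total ‖g k ω‖ 1 with h | h
    · have h1 : ‖g k ω‖ ^ (1 + β) ≤ 1 := Real.rpow_le_one h0 h (by linarith)
      nlinarith [sq_nonneg ‖g k ω‖]
    · have h1 : ‖g k ω‖ ^ (1 + β) ≤ ‖g k ω‖ ^ (2:ℝ) :=
        Real.rpow_le_rpow_of_exponent_le h (by linarith)
      have h2 : ‖g k ω‖ ^ (2:ℝ) = ‖g k ω‖ ^ 2 := by
        rw [show (2:ℝ) = ((2:ℕ):ℝ) by norm_num, Real.rpow_natCast]
      rw [h2] at h1
      linarith
  -- expectations of norm powers are bounded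
  have hEbound : ∀ (f : Ω → ℝ) (D : ℝ) (k : ℕ), Integrable f P →
      (∀ᵐ ω ∂P, (P[f | ℱ k]) ω ≤ D) → ∫ ω, f ω ∂P ≤ D := by
    intro f D k hfint hbd
    calc ∫ ω, f ω ∂P = ∫ ω, (P[f | ℱ k]) ω ∂P := (integral_condExp (ℱ.le k)).symm
      _ ≤ ∫ _, D ∂P := integral_mono_ae integrable_condExp (integrable_const D) hbd
      _ = D := by simp
  have hE1 : ∀ k, ∫ ω, ‖g k ω‖ ∂P ≤ D₁ := fun k =>
    hEbound _ _ k (hgnorm_int k) (hg1 k)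
  have hE1β : ∀ k, ∫ ω, ‖g k ω‖ ^ (1 + β) ∂P ≤ D1β := fun k =>
    hEbound _ _ k (hg1β_int k) (hg1β k)
  have hE2 : ∀ k, ∫ ω, ‖g k ω‖ ^ 2 ∂P ≤ D₂ := fun k =>
    hEbound _ _ k (hgsq_int k) (hg2 k)
  have hE1nn : ∀ k, 0 ≤ ∫ ω, ‖g k ω‖ ∂P := fun k =>
    integral_nonneg fun ω => norm_nonneg _
  have hE1βnn : ∀ k, 0 ≤ ∫ ω, ‖g k ω‖ ^ (1 + β) ∂P := fun k =>
    integral_nonneg fun ω => Real.rpow_nonneg (norm_nonneg _) _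
  have hE2nn : ∀ k, 0 ≤ ∫ ω, ‖g k ω‖ ^ 2 ∂P := fun k =>
    integral_nonneg fun ω => sq_nonneg _
  -- coordinatewise facts
  have habs : ∀ k ω (i : Fin d), |g k ω i| ≤ ‖g k ω‖ := by
    intro k ω i
    calc |g k ω i| = |⟪EuclideanSpace.single i (1:ℝ), g k ω⟫| := by
          rw [EuclideanSpace.inner_single_left]; simp
      _ ≤ ‖EuclideanSpace.single i (1:ℝ)‖ * ‖g k ω‖ := abs_real_inner_le_norm _ _
      _ = ‖g k ω‖ := by rw [EuclideanSpace.norm_single]; simp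
  have hgi_int : ∀ k (i : Fin d), Integrable (fun ω => g k ω i) P := fun k i =>
    (EuclideanSpace.proj (𝕜 := ℝ) i).integrable_comp (hg_int k)
  have hco : ∀ k (i : Fin d), (fun ω => J' (θ k ω) i) =ᵐ[P] P[fun ω => g k ω i | ℱ k] := by
    intro k i
    have h1 := my_condexp_clm_comm (ℱ.le k) (EuclideanSpace.proj (𝕜 := ℝ) i) (hg_int k)
    have h2 : (fun ω => (EuclideanSpace.proj (𝕜 := ℝ) i) ((P[g k | ℱ k]) ω)) =ᵐ[P]
        (fun ω => J' (θ k ω) i) := by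
      filter_upwards [hgmean k] with ω hω
      simp [hω]
    exact h2.symm.trans h1
  have hvb : ∀ k (i : Fin d), ∀ᵐ ω ∂P, |J' (θ k ω) i| ≤ D₁ := by
    intro k i
    have hup : P[fun ω => g k ω i | ℱ k] ≤ᵐ[P] P[fun ω' => ‖g k ω'‖ | ℱ k] :=
      condExp_mono (hgi_int k i) (hgnorm_int k)
        (ae_of_all _ fun ω => le_trans (le_abs_self _) (habs k ω i))
    have hdown : P[fun ω => -(g k ω i) | ℱ k] ≤ᵐ[P] P[fun ω' => ‖g k ω'‖ | ℱ k] :=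
      condExp_mono (hgi_int k i).neg (hgnorm_int k)
        (ae_of_all _ fun ω => le_trans (neg_le_abs _) (habs k ω i))
    have hneg : P[fun ω => -(g k ω i) | ℱ k] =ᵐ[P] -(P[fun ω => g k ω i | ℱ k]) :=
      condExp_neg _ _
    filter_upwards [hco k i, hup, hdown, hneg, hg1 k] with ω h1 h2 h3 h4 h5
    rw [abs_le]
    constructor
    · have := h3; rw [h4] at this
      simp only [Pi.neg_apply] at this
      rw [h1]; linarith
    · rw [h1]; linarith
  have hvi_sm : ∀ k (i : Fin d), StronglyMeasurable[ℱ k] (fun ω => J' (θ k ω) i) :=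
    fun k i => ((EuclideanSpace.proj (𝕜 := ℝ) i).continuous.measurable.comp
      (hvm k)).stronglyMeasurable
  have hvig_int : ∀ k (i : Fin d), Integrable (fun ω => J' (θ k ω) i * g k ω i) P := by
    intro k i
    refine Integrable.mono' ((hgnorm_int k).const_mul D₁)
      ((((EuclideanSpace.proj (𝕜 := ℝ) i).continuous.measurable.comp (hvm0 k)).mul
        ((EuclideanSpace.proj (𝕜 := ℝ) i).continuous.measurable.comp
          (hgm0 k))).aestronglyMeasurable) ?_
    filter_upwards [hvb k i] with ω h1
    rw [Real.norm_eq_abs, abs_mul]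
    exact mul_le_mul h1 (habs k ω i) (abs_nonneg _)
      (le_trans (abs_nonneg _) h1)
  have hvv_int : ∀ k (i : Fin d), Integrable (fun ω => J' (θ k ω) i * J' (θ k ω) i) P := by
    intro k i
    refine Integrable.mono' (integrable_const (D₁ * D₁))
      ((((EuclideanSpace.proj (𝕜 := ℝ) i).continuous.measurable.comp (hvm0 k)).mul
        ((EuclideanSpace.proj (𝕜 := ℝ) i).continuous.measurable.comp
          (hvm0 k))).aestronglyMeasurable) ?_
    filter_upwards [hvb k i] with ω h1
    rw [Real.norm_eq_abs, abs_mul]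
    exact mul_le_mul h1 h1 (abs_nonneg _) (le_trans (abs_nonneg _) h1)
  -- key identity per coordinate
  have hIdent : ∀ k (i : Fin d),
      ∫ ω, J' (θ k ω) i * g k ω i ∂P = ∫ ω, J' (θ k ω) i * J' (θ k ω) i ∂P := by
    intro k i
    have hpull := condExp_stronglyMeasurable_mul_of_bound (ℱ.le k) (hvi_sm k i)
      (hgi_int k i) D₁ (by
        filter_upwards [hvb k i] with ω h
        simpa [Real.norm_eq_abs] using h)
    calc ∫ ω, J' (θ k ω) i * g k ω i ∂P
        = ∫ ω, (P[(fun ω => J' (θ k ω) i) * (fun ω => g k ω i) | ℱ k]) ω ∂P :=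
          (integral_condExp (ℱ.le k)).symm
      _ = ∫ ω, ((fun ω => J' (θ k ω) i) * P[fun ω => g k ω i | ℱ k]) ω ∂P :=
          integral_congr_ae hpull
      _ = ∫ ω, J' (θ k ω) i * J' (θ k ω) i ∂P := by
          refine integral_congr_ae ?_
          filter_upwards [hco k i] with ω h
          simp only [Pi.mul_apply]
          rw [← h]
  -- inner product expansion
  have hinner_eq : ∀ k ω, ⟪J' (θ k ω), g k ω⟫ = ∑ i, J' (θ k ω) i * g k ω i := by
    intro k ω
    simp [PiLp.inner_apply, RCLike.inner_apply, conj_trivial]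
    exact Finset.sum_congr rfl fun i _ => mul_comm _ _
  have hnormsq_eq : ∀ k ω, ‖J' (θ k ω)‖ ^ 2 = ∑ i, J' (θ k ω) i * J' (θ k ω) i := by
    intro k ω
    rw [← real_inner_self_eq_norm_sq]
    simp [PiLp.inner_apply, RCLike.inner_apply, conj_trivial]
    rw [EuclideanSpace.norm_sq_eq]; simp [Real.norm_eq_abs, sq]
  have hinner_int : ∀ k, Integrable (fun ω => ⟪J' (θ k ω), g k ω⟫) P := by
    intro k
    have : (fun ω => ⟪J' (θ k ω), g k ω⟫)
        = fun ω => ∑ i, J' (θ k ω) i * g k ω i := funext fun ω => hinner_eq k ω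
    rw [this]
    exact integrable_finset_sum _ fun i _ => hvig_int k i
  have hnormsq_int : ∀ k, Integrable (fun ω => ‖J' (θ k ω)‖ ^ 2) P := by
    intro k
    have : (fun ω => ‖J' (θ k ω)‖ ^ 2)
        = fun ω => ∑ i, J' (θ k ω) i * J' (θ k ω) i := funext fun ω => hnormsq_eq k ω
    rw [this]
    exact integrable_finset_sum _ fun i _ => hvv_int k i
  have hkey : ∀ k, ∫ ω, ⟪J' (θ k ω), g k ω⟫ ∂P = ∫ ω, ‖J' (θ k ω)‖ ^ 2 ∂P := by
    intro k
    calc ∫ ω, ⟪J' (θ k ω), g k ω⟫ ∂P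
        = ∫ ω, ∑ i, J' (θ k ω) i * g k ω i ∂P := by
          exact integral_congr_ae (ae_of_all _ fun ω => hinner_eq k ω)
      _ = ∑ i, ∫ ω, J' (θ k ω) i * g k ω i ∂P :=
          integral_finset_sum _ fun i _ => hvig_int k i
      _ = ∑ i, ∫ ω, J' (θ k ω) i * J' (θ k ω) i ∂P :=
          Finset.sum_congr rfl fun i _ => hIdent k i
      _ = ∫ ω, ∑ i, J' (θ k ω) i * J' (θ k ω) i ∂P :=
          (integral_finset_sum _ fun i _ => hvv_int k i).symm
      _ = ∫ ω, ‖J' (θ k ω)‖ ^ 2 ∂P := by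
          exact integral_congr_ae (ae_of_all _ fun ω => (hnormsq_eq k ω).symm)
  -- pointwise smoothness step
  have hpt : ∀ k ω, η * ⟪J' (θ k ω), g k ω⟫
      ≤ J (θ (k+1) ω) - J (θ k ω)
        + MJ * ((η * η ^ β) * ‖g k ω‖ ^ (1 + β) + η ^ 2 * ‖g k ω‖ ^ 2
          + lam * η * ‖g k ω‖) := by
    intro k ω
    have hx := hsmooth (θ (k+1) ω) (θ k ω)
    have hxy : θ (k+1) ω - θ k ω = η • g k ω := by
      rw [hθrec k ω]; abel
    rw [hxy] at hx
    have h2 : ‖η • g k ω‖ = η * ‖g k ω‖ := by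
      rw [norm_smul, Real.norm_eq_abs, abs_of_pos hηpos]
    have h3 : ‖η • g k ω‖ ^ (1 + β) = (η * η ^ β) * ‖g k ω‖ ^ (1 + β) := by
      rw [h2, Real.mul_rpow hηpos.le (norm_nonneg _), Real.rpow_add hηpos, Real.rpow_one]
    have h4 : ‖η • g k ω‖ ^ 2 = η ^ 2 * ‖g k ω‖ ^ 2 := by
      rw [h2, mul_pow]
    have h1 : ⟪J' (θ k ω), η • g k ω⟫ = η * ⟪J' (θ k ω), g k ω⟫ :=
      real_inner_smul_right _ _ _
    rw [h1, h3, h4, h2] at hx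
    have := (abs_le.mp hx).1
    linarith
  -- products of constants with L
  have hMD1 : MJ * D₁ ≤ L := by
    rw [hL]
    exact mul_le_mul_of_nonneg_left (le_max_left _ _) hMJ
  have hMD1β : MJ * D1β ≤ L := by
    rw [hL]
    exact mul_le_mul_of_nonneg_left (le_trans (le_max_left _ _) (le_max_right _ _)) hMJ
  have hMD2 : MJ * D₂ ≤ L := by
    rw [hL]
    exact mul_le_mul_of_nonneg_left (le_trans (le_max_right _ _) (le_max_right _ _)) hMJ
  -- integrability of J along iterates
  have hJint : ∀ j, Integrable (fun ω => J (θ j ω)) P := fun j =>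
    Integrable.mono' (integrable_const Jmax)
      ((hJcont.measurable.comp (hθm0 j)).aestronglyMeasurable)
      (ae_of_all _ fun ω => by simpa [Real.norm_eq_abs] using hJbdd (θ j ω))
  -- one-step inequality
  have hstep : ∀ k, η * ∫ ω, ‖J' (θ k ω)‖ ^ 2 ∂P
      ≤ (∫ ω, J (θ (k+1) ω) ∂P) - (∫ ω, J (θ k ω) ∂P)
        + L * (2 * (η * η ^ β) + lam * η) := by
    intro k
    have hint_rhs : Integrable (fun ω => J (θ (k+1) ω) - J (θ k ω)
        + MJ * ((η * η ^ β) * ‖g k ω‖ ^ (1 + β) + η ^ 2 * ‖g k ω‖ ^ 2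
          + lam * η * ‖g k ω‖)) P := by
      refine Integrable.add ((hJint (k+1)).sub (hJint k)) (Integrable.const_mul ?_ MJ)
      exact (((hg1β_int k).const_mul _).add ((hgsq_int k).const_mul _)).add
        ((hgnorm_int k).const_mul _)
    have h0 : ∫ ω, η * ⟪J' (θ k ω), g k ω⟫ ∂P
        ≤ ∫ ω, (J (θ (k+1) ω) - J (θ k ω)
          + MJ * ((η * η ^ β) * ‖g k ω‖ ^ (1 + β) + η ^ 2 * ‖g k ω‖ ^ 2
            + lam * η * ‖g k ω‖)) ∂P :=
      integral_mono ((hinner_int k).const_mul η) hint_rhs (fun ω => hpt k ω)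
    rw [integral_const_mul, hkey k] at h0
    have hM1 : Integrable (fun ω => (η * η ^ β) * ‖g k ω‖ ^ (1 + β)) P :=
      (hg1β_int k).const_mul _
    have hM2 : Integrable (fun ω => η ^ 2 * ‖g k ω‖ ^ 2) P := (hgsq_int k).const_mul _
    have hM3 : Integrable (fun ω => lam * η * ‖g k ω‖) P := (hgnorm_int k).const_mul _
    have hDint : Integrable (fun ω => J (θ (k+1) ω) - J (θ k ω)) P :=
      (hJint (k+1)).sub (hJint k)
    have e1 : ∫ ω, (J (θ (k+1) ω) - J (θ k ω)
        + MJ * ((η * η ^ β) * ‖g k ω‖ ^ (1 + β) + η ^ 2 * ‖g k ω‖ ^ 2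
          + lam * η * ‖g k ω‖)) ∂P
        = (∫ ω, (J (θ (k+1) ω) - J (θ k ω)) ∂P)
          + ∫ ω, MJ * ((η * η ^ β) * ‖g k ω‖ ^ (1 + β) + η ^ 2 * ‖g k ω‖ ^ 2
            + lam * η * ‖g k ω‖) ∂P :=
      integral_add hDint (((hM1.add hM2).add hM3).const_mul MJ)
    have e2 : ∫ ω, (J (θ (k+1) ω) - J (θ k ω)) ∂P
        = (∫ ω, J (θ (k+1) ω) ∂P) - ∫ ω, J (θ k ω) ∂P :=
      integral_sub (hJint (k+1)) (hJint k)
    have e3 : ∫ ω, MJ * ((η * η ^ β) * ‖g k ω‖ ^ (1 + β) + η ^ 2 * ‖g k ω‖ ^ 2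
          + lam * η * ‖g k ω‖) ∂P
        = MJ * ∫ ω, ((η * η ^ β) * ‖g k ω‖ ^ (1 + β) + η ^ 2 * ‖g k ω‖ ^ 2
          + lam * η * ‖g k ω‖) ∂P := integral_const_mul MJ _
    have e4 : ∫ ω, ((η * η ^ β) * ‖g k ω‖ ^ (1 + β) + η ^ 2 * ‖g k ω‖ ^ 2
          + lam * η * ‖g k ω‖) ∂P
        = (∫ ω, ((η * η ^ β) * ‖g k ω‖ ^ (1 + β) + η ^ 2 * ‖g k ω‖ ^ 2) ∂P)
          + ∫ ω, lam * η * ‖g k ω‖ ∂P := integral_add (hM1.add hM2) hM3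
    have e5 : ∫ ω, ((η * η ^ β) * ‖g k ω‖ ^ (1 + β) + η ^ 2 * ‖g k ω‖ ^ 2) ∂P
        = (∫ ω, (η * η ^ β) * ‖g k ω‖ ^ (1 + β) ∂P)
          + ∫ ω, η ^ 2 * ‖g k ω‖ ^ 2 ∂P := integral_add hM1 hM2
    have e6 : ∫ ω, (η * η ^ β) * ‖g k ω‖ ^ (1 + β) ∂P
        = (η * η ^ β) * ∫ ω, ‖g k ω‖ ^ (1 + β) ∂P := integral_const_mul _ _
    have e7 : ∫ ω, η ^ 2 * ‖g k ω‖ ^ 2 ∂P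
        = η ^ 2 * ∫ ω, ‖g k ω‖ ^ 2 ∂P := integral_const_mul _ _
    have e8 : ∫ ω, lam * η * ‖g k ω‖ ∂P
        = lam * η * ∫ ω, ‖g k ω‖ ∂P := integral_const_mul _ _
    have hrhs : ∫ ω, (J (θ (k+1) ω) - J (θ k ω)
        + MJ * ((η * η ^ β) * ‖g k ω‖ ^ (1 + β) + η ^ 2 * ‖g k ω‖ ^ 2
          + lam * η * ‖g k ω‖)) ∂P
        = (∫ ω, J (θ (k+1) ω) ∂P) - (∫ ω, J (θ k ω) ∂P)
          + MJ * ((η * η ^ β) * (∫ ω, ‖g k ω‖ ^ (1 + β) ∂P)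
            + η ^ 2 * (∫ ω, ‖g k ω‖ ^ 2 ∂P) + lam * η * (∫ ω, ‖g k ω‖ ∂P)) := by
      rw [e1, e2, e3, e4, e5, e6, e7, e8]
    rw [hrhs] at h0
    refine le_trans h0 ?_
    have hη2 : η ^ 2 ≤ η * η ^ β := by
      rw [sq]
      exact mul_le_mul_of_nonneg_left hηβ hηpos.le
    have key : MJ * ((η * η ^ β) * (∫ ω, ‖g k ω‖ ^ (1 + β) ∂P)
        + η ^ 2 * (∫ ω, ‖g k ω‖ ^ 2 ∂P) + lam * η * (∫ ω, ‖g k ω‖ ∂P))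
        ≤ L * (2 * (η * η ^ β) + lam * η) := by
      have t1 : MJ * ((η * η ^ β) * (∫ ω, ‖g k ω‖ ^ (1 + β) ∂P))
          ≤ (η * η ^ β) * L := by
        have : MJ * (∫ ω, ‖g k ω‖ ^ (1 + β) ∂P) ≤ MJ * D1β :=
          mul_le_mul_of_nonneg_left (hE1β k) hMJ
        nlinarith [mul_pos hηpos hηβpos]
      have t2 : MJ * (η ^ 2 * (∫ ω, ‖g k ω‖ ^ 2 ∂P)) ≤ (η * η ^ β) * L := by
        have h1 : MJ * (∫ ω, ‖g k ω‖ ^ 2 ∂P) ≤ MJ * D₂ :=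
          mul_le_mul_of_nonneg_left (hE2 k) hMJ
        have h2 : MJ * (η ^ 2 * (∫ ω, ‖g k ω‖ ^ 2 ∂P))
            = η ^ 2 * (MJ * (∫ ω, ‖g k ω‖ ^ 2 ∂P)) := by ring
        have h3 : η ^ 2 * (MJ * (∫ ω, ‖g k ω‖ ^ 2 ∂P)) ≤ η ^ 2 * L := by
          have := le_trans h1 hMD2
          exact mul_le_mul_of_nonneg_left this (sq_nonneg η)
        have h4 : η ^ 2 * L ≤ (η * η ^ β) * L :=
          mul_le_mul_of_nonneg_right hη2 hLpos.le
        linarith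
      have t3 : MJ * (lam * η * (∫ ω, ‖g k ω‖ ∂P)) ≤ lam * η * L := by
        have h1 : MJ * (∫ ω, ‖g k ω‖ ∂P) ≤ MJ * D₁ :=
          mul_le_mul_of_nonneg_left (hE1 k) hMJ
        have h2 : MJ * (lam * η * (∫ ω, ‖g k ω‖ ∂P))
            = lam * η * (MJ * (∫ ω, ‖g k ω‖ ∂P)) := by ring
        rw [h2]
        exact mul_le_mul_of_nonneg_left (le_trans h1 hMD1)
          (mul_nonneg hlam hηpos.le)
      nlinarith [t1, t2, t3]
    linarith
  -- telescoping
  set S : ℝ := ∑ k ∈ Finset.range K, ∫ ω, ‖J' (θ k ω)‖ ^ 2 ∂P with hSdef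
  have ha0 : ∫ ω, J (θ 0 ω) ∂P = J θ0 := by
    simp only [hθ0]
    simp
  have haK : ∫ ω, J (θ K ω) ∂P ≤ Jstar := by
    calc ∫ ω, J (θ K ω) ∂P ≤ ∫ _, Jstar ∂P :=
          integral_mono (hJint K) (integrable_const Jstar) (fun ω => hJub _)
      _ = Jstar := by simp
  have hsum : η * S ≤ G + (K : ℝ) * (L * (2 * (η * η ^ β) + lam * η)) := by
    rw [hSdef, Finset.mul_sum]
    calc ∑ k ∈ Finset.range K, η * ∫ ω, ‖J' (θ k ω)‖ ^ 2 ∂P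
        ≤ ∑ k ∈ Finset.range K, ((∫ ω, J (θ (k+1) ω) ∂P) - (∫ ω, J (θ k ω) ∂P)
            + L * (2 * (η * η ^ β) + lam * η)) :=
          Finset.sum_le_sum fun k _ => hstep k
      _ = ((∫ ω, J (θ K ω) ∂P) - (∫ ω, J (θ 0 ω) ∂P))
            + (K : ℝ) * (L * (2 * (η * η ^ β) + lam * η)) := by
          rw [Finset.sum_add_distrib, Finset.sum_range_sub (fun k => ∫ ω, J (θ k ω) ∂P),
            Finset.sum_const, Finset.card_range, nsmul_eq_mul]
      _ ≤ G + (K : ℝ) * (L * (2 * (η * η ^ β) + lam * η)) := by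
          rw [ha0, hGdef]
          have := haK
          linarith
  -- divide by K η
  have hKη : 0 < (K : ℝ) * η := mul_pos hKpos hηpos
  have hdiv : (1 / (K : ℝ)) * S ≤ G / ((K : ℝ) * η) + 2 * L * η ^ β + L * lam := by
    have h1 : (η * S) / ((K : ℝ) * η)
        ≤ (G + (K : ℝ) * (L * (2 * (η * η ^ β) + lam * η))) / ((K : ℝ) * η) := by
      gcongr
    have h2 : (η * S) / ((K : ℝ) * η) = (1 / (K : ℝ)) * S := by
      field_simp
    have h3 : (G + (K : ℝ) * (L * (2 * (η * η ^ β) + lam * η))) / ((K : ℝ) * η)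
        = G / ((K : ℝ) * η) + 2 * L * η ^ β + L * lam := by
      field_simp
      ring
    rw [h2, h3] at h1
    exact h1
  -- rpow algebra
  have hE1eq : G / ((K : ℝ) * η) = (2 * L) ^ c * G ^ b * (K : ℝ) ^ (-b) := by
    refine my_log_eq (by positivity) (by positivity) ?_
    rw [Real.log_div hG.ne' hKη.ne', Real.log_mul hKpos.ne' hηpos.ne', hηdef',
      Real.log_mul (Real.rpow_pos_of_pos hr c).ne' (Real.rpow_pos_of_pos hKpos (-c)).ne',
      Real.log_rpow hr, Real.log_rpow hKpos, Real.log_div hG.ne' h2L.ne',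
      Real.log_mul (by positivity : ((2*L:ℝ) ^ c * G ^ b) ≠ 0)
        (Real.rpow_pos_of_pos hKpos (-b)).ne',
      Real.log_mul (Real.rpow_pos_of_pos h2L c).ne' (Real.rpow_pos_of_pos hG b).ne',
      Real.log_rpow h2L, Real.log_rpow hG, Real.log_rpow hKpos,
      hbdef, hcdef]
    field_simp
    ring
  have hE2eq : 2 * L * η ^ β = (2 * L) ^ c * G ^ b * (K : ℝ) ^ (-b) := by
    refine my_log_eq (by positivity) (by positivity) ?_
    rw [Real.log_mul h2L.ne' hηβpos.ne', Real.log_rpow hηpos, hηdef',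
      Real.log_mul (Real.rpow_pos_of_pos hr c).ne' (Real.rpow_pos_of_pos hKpos (-c)).ne',
      Real.log_rpow hr, Real.log_rpow hKpos, Real.log_div hG.ne' h2L.ne',
      Real.log_mul (by positivity : ((2*L:ℝ) ^ c * G ^ b) ≠ 0)
        (Real.rpow_pos_of_pos hKpos (-b)).ne',
      Real.log_mul (Real.rpow_pos_of_pos h2L c).ne' (Real.rpow_pos_of_pos hG b).ne',
      Real.log_rpow h2L, Real.log_rpow hG, Real.log_rpow hKpos,
      hbdef, hcdef]
    field_simp
    ring
  -- conclusion
  have hgoal : (1 / (K : ℝ)) * S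
      ≤ 2 * (2 * L) ^ c * G ^ b * (K : ℝ) ^ (-b) + L * lam := by
    have hX : 2 * (2 * L) ^ c * G ^ b * (K : ℝ) ^ (-b)
        = ((2 * L) ^ c * G ^ b * (K : ℝ) ^ (-b))
          + ((2 * L) ^ c * G ^ b * (K : ℝ) ^ (-b)) := by ring
    linarith [hdiv, hE1eq, hE2eq, hX]
  rw [show -β / (1 + β) = -b by rw [hbdef]; rw [neg_div]]
  exact hgoal
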